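/- There exists a constant c > 0 such that for every integer N ≥ 6, N · F(⌊N/2⌋, ⌊N/3⌋) ≤ c · E(0, ⌊5N/6⌋). -/

import Mathlib

open Finset Polynomial Real

/-- `E(j,l) = (∏_{r=1}^{l-j} 2 sin(rπ/N))·(∏_{r=1}^{l+j} 2 sin(rπ/N))`. -/
noncomputable def EE (N j l : ℕ) : ℝ :=
  (∏ r ∈ Finset.Icc 1 (l - j), 2 * Real.sin (r * Real.pi / N)) *
    ∏ r ∈ Finset.Icc 1 (l + j), 2 * Real.sin (r * Real.pi / N)

/-- `F(j,l) = (∏_{r=1}^{l+j} 2 sin(rπ/N)) / (∏_{r=1}^{j-l-1} 2 sin(rπ/N))`. -/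
noncomputable def FF (N j l : ℕ) : ℝ :=
  (∏ r ∈ Finset.Icc 1 (l + j), 2 * Real.sin (r * Real.pi / N)) /
    ∏ r ∈ Finset.Icc 1 (j - l - 1), 2 * Real.sin (r * Real.pi / N)

noncomputable def pS (N k : ℕ) : ℝ := ∏ r ∈ Finset.Icc 1 k, 2 * Real.sin (r * Real.pi / N)

lemma abs_one_sub_exp (θ : ℝ) (h0 : 0 ≤ θ) (h2 : θ ≤ 2 * π) :
    ‖1 - Complex.exp (θ * Complex.I)‖ = 2 * Real.sin (θ / 2) := by
  have h1 : (1 : ℂ) - Complex.exp (θ * Complex.I)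
      = ((1 - Real.cos θ : ℝ) : ℂ) + ((-Real.sin θ : ℝ) : ℂ) * Complex.I := by
    rw [Complex.exp_mul_I, ← Complex.ofReal_cos, ← Complex.ofReal_sin]
    push_cast; ring
  rw [h1, Complex.norm_def, Complex.normSq_add_mul_I]
  have hs : Real.sin (θ / 2) = Real.sqrt ((1 - Real.cos θ) / 2) :=
    Real.sin_half_eq_sqrt h0 h2
  have hc : Real.cos θ ≤ 1 := Real.cos_le_one θ
  have hsq : Real.sin (θ / 2) ^ 2 = (1 - Real.cos θ) / 2 := by
    rw [hs, Real.sq_sqrt (by linarith)]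
  have hpy := Real.sin_sq_add_cos_sq θ
  have key : (1 - Real.cos θ) ^ 2 + (-Real.sin θ) ^ 2 = (2 * Real.sin (θ / 2)) ^ 2 := by
    nlinarith
  rw [key, Real.sqrt_sq (by rw [hs]; positivity)]

lemma prod_one_sub_zeta (N : ℕ) (hN : 1 ≤ N) :
    (∏ k ∈ Finset.Icc 1 (N - 1), (1 - Complex.exp (2 * Real.pi * Complex.I * k / N))) = N := by
  have hNpos : 0 < N := hN
  set ζ : ℂ := Complex.exp (2 * Real.pi * Complex.I / N) with hζdef
  have hζ : IsPrimitiveRoot ζ N := Complex.isPrimitiveRoot_exp N hNpos.ne'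
  have h1 : (X ^ N - 1 : ℂ[X]) = ∏ η ∈ nthRootsFinset N (1 : ℂ), (X - C η) :=
    X_pow_sub_one_eq_prod hNpos hζ
  have hone : (1 : ℂ) ∈ nthRootsFinset N (1 : ℂ) := Polynomial.one_mem_nthRootsFinset hNpos
  have h2 : (X ^ N - 1 : ℂ[X]) = (X - C 1) * ∏ η ∈ (nthRootsFinset N (1 : ℂ)).erase 1, (X - C η) := by
    rw [h1, ← Finset.mul_prod_erase _ _ hone]
  have h3 : (X ^ N - 1 : ℂ[X]) = (X - C 1) * (∑ i ∈ Finset.range N, X ^ i) := by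
    have := geom_sum_mul (X : ℂ[X]) N
    rw [C_1]
    linear_combination -this
  have hXne : (X - C 1 : ℂ[X]) ≠ 0 := X_sub_C_ne_zero 1
  have h4 : (∏ η ∈ (nthRootsFinset N (1 : ℂ)).erase 1, (X - C η)) = ∑ i ∈ Finset.range N, (X : ℂ[X]) ^ i :=
    mul_left_cancel₀ hXne (h2.symm.trans h3)
  have h5 : (∏ η ∈ (nthRootsFinset N (1 : ℂ)).erase 1, (1 - η)) = N := by
    have := congrArg (Polynomial.eval 1) h4
    simpa [Polynomial.eval_prod] using this
  haveI : NeZero N := ⟨hNpos.ne'⟩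
  have h6 : (∏ k ∈ Finset.Icc 1 (N - 1), (1 - Complex.exp (2 * Real.pi * Complex.I * k / N)))
      = ∏ η ∈ (nthRootsFinset N (1 : ℂ)).erase 1, (1 - η) := by
    refine Finset.prod_nbij (fun k => ζ ^ k) ?_ ?_ ?_ ?_
    · intro k hk
      simp only [Finset.mem_Icc] at hk
      refine Finset.mem_erase.2 ⟨hζ.pow_ne_one_of_pos_of_lt (by omega) (by omega), ?_⟩
      rw [Polynomial.mem_nthRootsFinset hNpos 1, ← pow_mul, mul_comm k N, pow_mul, hζ.pow_eq_one,
        one_pow]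
    · intro a ha b hb hab
      simp only [Finset.coe_Icc, Set.mem_Icc] at ha hb
      exact hζ.pow_inj (by omega) (by omega) hab
    · intro η hη
      simp only [Finset.coe_Icc, Finset.coe_erase, Set.mem_diff] at hη
      obtain ⟨hη1, hη2⟩ := hη
      obtain ⟨i, hi, rfl⟩ := hζ.eq_pow_of_pow_eq_one ((Polynomial.mem_nthRootsFinset hNpos 1).1 hη1)
      have hi0 : i ≠ 0 := by
        rintro rfl; exact hη2 (by simp)
      refine ⟨i, ?_, rfl⟩
      simp only [Finset.coe_Icc, Set.mem_Icc]
      omega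
    · intro k hk
      show (1:ℂ) - _ = 1 - ζ ^ k
      rw [hζdef, ← Complex.exp_nat_mul]
      congr 2
      ring
  rw [h6, h5]

lemma pS_last (N : ℕ) (hN : 1 ≤ N) : pS N (N - 1) = N := by
  have h := prod_one_sub_zeta N hN
  have habs := congrArg (‖·‖) h
  rw [norm_prod, Complex.norm_natCast] at habs
  rw [← habs, pS]
  refine Finset.prod_congr rfl fun k hk => ?_
  simp only [Finset.mem_Icc] at hk
  have hNpos : (0:ℝ) < N := by exact_mod_cast (by omega : 0 < N)
  have hkN : (k:ℝ) ≤ N := by exact_mod_cast (by omega : k ≤ N)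
  have harg : (2 * Real.pi * Complex.I * k / N)
      = ((2 * Real.pi * k / N : ℝ) : ℂ) * Complex.I := by
    push_cast; ring
  rw [harg, abs_one_sub_exp (2 * Real.pi * k / N) (by positivity)
    (by rw [div_le_iff₀ hNpos]; nlinarith [Real.pi_pos])]
  congr 1
  ring

lemma pS_pos (N k : ℕ) (hk : k < N) : 0 < pS N k := by
  refine Finset.prod_pos fun r hr => ?_
  simp only [Finset.mem_Icc] at hr
  have hNpos : (0:ℝ) < N := by exact_mod_cast (by omega : 0 < N)
  have hr0 : (0:ℝ) < r := by exact_mod_cast (by omega : 0 < r)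
  have hrN : (r:ℝ) < N := by exact_mod_cast (by omega : r < N)
  have : 0 < Real.sin (r * Real.pi / N) := by
    apply Real.sin_pos_of_pos_of_lt_pi
    · positivity
    · rw [div_lt_iff₀ hNpos]; nlinarith [Real.pi_pos]
  linarith

lemma pS_sym (N k : ℕ) (hN : 1 ≤ N) (hk : k ≤ N - 1) : pS N k * pS N (N - 1 - k) = N := by
  have hNpos : 0 < N := hN
  have hNR : (0:ℝ) < N := by exact_mod_cast hNpos
  have e1 : ∀ x : ℕ, Finset.Icc 1 x = Finset.Ioc 0 x := fun x => Finset.Icc_add_one_left_eq_Ioc 0 x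
  have key := Finset.prod_Ioc_consecutive (fun r : ℕ => 2 * Real.sin (r * Real.pi / N))
    (Nat.zero_le k) hk
  have hrefl : (∏ r ∈ Finset.Ioc k (N - 1), 2 * Real.sin (r * Real.pi / N))
      = ∏ r ∈ Finset.Ioc 0 (N - 1 - k), 2 * Real.sin (r * Real.pi / N) := by
    refine Finset.prod_nbij' (fun r => N - r) (fun r => N - r) ?_ ?_ ?_ ?_ ?_
    · intro a ha
      simp only [Finset.mem_Ioc] at ha ⊢
      omega
    · intro a ha
      simp only [Finset.mem_Ioc] at ha ⊢
      omega
    · intro a ha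
      simp only [Finset.mem_Ioc] at ha
      show N - (N - a) = a
      omega
    · intro a ha
      simp only [Finset.mem_Ioc] at ha
      show N - (N - a) = a
      omega
    · intro a ha
      simp only [Finset.mem_Ioc] at ha
      show 2 * Real.sin (a * Real.pi / N) = 2 * Real.sin (((N - a : ℕ):ℝ) * Real.pi / N)
      have hc : ((N - a : ℕ) : ℝ) = (N:ℝ) - a := by
        rw [Nat.cast_sub (by omega)]
      rw [hc]
      have harg : ((N:ℝ) - a) * Real.pi / N = Real.pi - a * Real.pi / N := by
        field_simp
      rw [harg, Real.sin_pi_sub]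
  have hlast := pS_last N hN
  simp only [pS, e1] at hlast ⊢
  rw [← hrefl, key]
  exact hlast

/-- Lemma 9 of the paper: `N · F(N/2, N/3) = E(0, 5N/6) · O(1)`. -/
theorem N_mul_F_le :
    ∃ c : ℝ, 0 < c ∧ ∀ N : ℕ, 6 ≤ N →
      (N : ℝ) * FF N (N / 2) (N / 3) ≤ c * EE N 0 (5 * N / 6) := by
  refine ⟨2, by norm_num, fun N hN6 => ?_⟩
  have hN1 : 1 ≤ N := by omega
  have hNR : (0:ℝ) < N := by exact_mod_cast (by omega : 0 < N)
  set j := N / 2 with hj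
  set l := N / 3 with hl
  set m := 5 * N / 6 with hm
  set a := l + j with ha
  set b := j - l - 1 with hb
  set k := N - 1 - m with hk
  have hEE : EE N 0 m = pS N m * pS N m := by
    simp only [EE, pS, Nat.sub_zero, Nat.add_zero]
  have hFF : FF N j l = pS N a / pS N b := by
    simp only [FF, pS, ha, hb]
  rw [hEE, hFF]
  have hmN : m ≤ N - 1 := by omega
  have hsym : pS N m * pS N k = N := pS_sym N m hN1 hmN
  have hmpos : 0 < pS N m := pS_pos N m (by omega)
  have hkpos : 0 < pS N k := pS_pos N k (by omega)
  have hbpos : 0 < pS N b := pS_pos N b (by omega)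
  have hapos : 0 < pS N a := pS_pos N a (by omega)
  rw [mul_div_assoc'] ;
  rw [div_le_iff₀ hbpos]
  have hcase : (a = m ∧ b = k) ∨ (a = m ∧ k = b + 1) ∨ (a + 1 = m ∧ b = k) := by omega
  rcases hcase with ⟨haa, hbb⟩ | ⟨haa, hbb⟩ | ⟨haa, hbb⟩
  · rw [haa, hbb, ← hsym]
    nlinarith [mul_pos (mul_pos hmpos hmpos) hkpos]
  · -- k = b + 1
    have hksin : pS N k = pS N b * (2 * Real.sin (((b+1:ℕ):ℝ) * Real.pi / N)) := by
      have h := Finset.prod_Icc_succ_top (by omega : 1 ≤ b + 1)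
        (fun r : ℕ => 2 * Real.sin (r * Real.pi / N))
      rw [hbb]
      exact h
    have hsin1 : Real.sin (((b+1:ℕ):ℝ) * Real.pi / N) ≤ 1 := Real.sin_le_one _
    have hkle : pS N k ≤ 2 * pS N b := by nlinarith
    rw [haa, ← hsym]
    nlinarith [mul_le_mul_of_nonneg_left hkle (le_of_lt (mul_pos hmpos hmpos))]
  · -- a + 1 = m
    have hmsin : pS N m = pS N a * (2 * Real.sin (((a+1:ℕ):ℝ) * Real.pi / N)) := by
      have h := Finset.prod_Icc_succ_top (by omega : 1 ≤ a + 1)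
        (fun r : ℕ => 2 * Real.sin (r * Real.pi / N))
      rw [← haa]
      exact h
    have hcm : ((a+1:ℕ):ℝ) = (m:ℝ) := by exact_mod_cast congrArg (Nat.cast : ℕ → ℝ) haa
    rw [hcm] at hmsin
    -- lower bound on sin
    have hNm : N - m = k + 1 := by omega
    have hcast : ((m:ℝ)) * Real.pi / N = Real.pi - ((N - m : ℕ):ℝ) * Real.pi / N := by
      rw [Nat.cast_sub (by omega)]
      field_simp; ring
    set x : ℝ := ((N - m : ℕ):ℝ) * Real.pi / N with hx
    have hx0 : 0 ≤ x := by
      have : (0:ℝ) ≤ ((N - m : ℕ):ℝ) := Nat.cast_nonneg _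
      positivity
    have hxhalf : x ≤ Real.pi / 2 := by
      rw [hx, div_le_div_iff₀ hNR (by norm_num : (0:ℝ) < 2)]
      have h2 : ((N - m : ℕ):ℝ) * 2 ≤ N := by
        exact_mod_cast (by omega : (N - m) * 2 ≤ N)
      nlinarith [Real.pi_pos]
    have hx6 : Real.pi / 6 ≤ x := by
      rw [hx, div_le_div_iff₀ (by norm_num : (0:ℝ) < 6) hNR]
      have h6 : (N:ℝ) ≤ ((N - m : ℕ):ℝ) * 6 := by
        exact_mod_cast (by omega : N ≤ (N - m) * 6)
      nlinarith [Real.pi_pos]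
    have hsinlb : 1 / 3 ≤ Real.sin x := by
      have habs := Real.mul_abs_le_abs_sin (x := x) (by rw [abs_of_nonneg hx0]; exact hxhalf)
      rw [abs_of_nonneg hx0] at habs
      rw [abs_of_nonneg (Real.sin_nonneg_of_nonneg_of_le_pi hx0
        (by linarith [Real.pi_pos]))] at habs
      have : (1:ℝ) / 3 ≤ 2 / Real.pi * x := by
        rw [div_mul_eq_mul_div, le_div_iff₀ Real.pi_pos]
        nlinarith
      linarith
    have hsinm : 1 / 3 ≤ Real.sin ((m:ℝ) * Real.pi / N) := by
      rw [hcast, Real.sin_pi_sub]; exact hsinlb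
    have h1 : pS N a * (1/3) ≤ pS N a * Real.sin ((m:ℝ) * Real.pi / N) :=
      mul_le_mul_of_nonneg_left hsinm hapos.le
    have hale : pS N a ≤ 2 * pS N m := by linarith [h1, hmsin, hapos.le]
    rw [hbb, ← hsym]
    calc pS N m * pS N k * pS N a ≤ pS N m * pS N k * (2 * pS N m) :=
          mul_le_mul_of_nonneg_left hale (mul_pos hmpos hkpos).le
      _ = 2 * (pS N m * pS N m) * pS N k := by ring
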